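/- Let V be a discriminator variety whose language contains two constants c₀, c₁ such that c₀ ≠ c₁ in the free algebra F of denumerable rank for V. Then V is structurally complete if and only if V is a minimal variety. -/

import Mathlib

open FirstOrder Language

universe u

/-- A quasi-identity `∀ x̄ [⋀ i, lhs i ≐ rhs i → cl ≐ cr]` in `k` variables with `n` premises. -/
structure QuasiId (L : FirstOrder.Language.{u, u}) where
  k : ℕ
  n : ℕ
  lhs : Fin n → L.Term (Fin k)
  rhs : Fin n → L.Term (Fin k)
  cl : L.Term (Fin k)
  cr : L.Term (Fin k)

variable {L : FirstOrder.Language.{u, u}}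

/-- Satisfaction of a quasi-identity in an algebra. -/
def QuasiId.Holds (q : QuasiId L) (M : Type u) [L.Structure M] : Prop :=
  ∀ x : Fin q.k → M,
    (∀ i, (q.lhs i).realize x = (q.rhs i).realize x) →
      q.cl.realize x = q.cr.realize x

/-- Satisfiability of the premise of a quasi-identity in an algebra. -/
def QuasiId.PremiseSat (q : QuasiId L) (M : Type u) [L.Structure M] : Prop :=
  ∃ x : Fin q.k → M, ∀ i, (q.lhs i).realize x = (q.rhs i).realize x

/-- An identity `∀ x̄, lhs ≐ rhs`. -/
structure EqId (L : FirstOrder.Language.{u, u}) where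
  k : ℕ
  lhs : L.Term (Fin k)
  rhs : L.Term (Fin k)

def EqId.Holds (e : EqId L) (M : Type u) [L.Structure M] : Prop :=
  ∀ x : Fin e.k → M, e.lhs.realize x = e.rhs.realize x

/-- A quasivariety: a class of algebras axiomatized by a set of quasi-identities. -/
def IsQuasivariety (Q : ∀ M : Type u, L.Structure M → Prop) : Prop :=
  ∃ S : Set (QuasiId L), ∀ (M : Type u) (iM : L.Structure M),
    Q M iM ↔ ∀ q ∈ S, @QuasiId.Holds L q M iM

/-- A variety: a class of algebras axiomatized by a set of identities. -/
def IsVariety (V : ∀ M : Type u, L.Structure M → Prop) : Prop :=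
  ∃ S : Set (EqId L), ∀ (M : Type u) (iM : L.Structure M),
    V M iM ↔ ∀ e ∈ S, @EqId.Holds L e M iM

/-- `F` is free for the class `Q` over the denumerable set of free generators `g 0, g 1, …`. -/
def IsFreeAlgOn (Q : ∀ M : Type u, L.Structure M → Prop)
    (F : Type u) [iF : L.Structure F] (g : ℕ → F) : Prop :=
  Q F iF ∧ Function.Injective g ∧
    ∀ (A : Type u) (iA : L.Structure A), Q A iA → ∀ f : ℕ → A,
      ∃! h : @Language.Hom L F A iF iA, ∀ m, h.toFun (g m) = f m

/-- Structural completeness: every quasi-identity true in the free algebra `F` holds in `Q`. -/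
def IsSC (Q : ∀ M : Type u, L.Structure M → Prop) (F : Type u) [L.Structure F] : Prop :=
  ∀ q : QuasiId L, q.Holds F →
    ∀ (M : Type u) (iM : L.Structure M), Q M iM → @QuasiId.Holds L q M iM

/-- Almost structural completeness: every active (premise satisfiable in `F`) quasi-identity
true in the free algebra `F` holds in `Q`. -/
def IsASC (Q : ∀ M : Type u, L.Structure M → Prop) (F : Type u) [L.Structure F] : Prop :=
  ∀ q : QuasiId L, q.Holds F → q.PremiseSat F →
    ∀ (M : Type u) (iM : L.Structure M), Q M iM → @QuasiId.Holds L q M iM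

/-- An idempotent element: forms a one-element subalgebra. -/
def IsIdemElem (M : Type u) [L.Structure M] (e : M) : Prop :=
  ∀ (m : ℕ) (f : L.Functions m), Structure.funMap f (fun _ : Fin m => e) = e

/-- Some elementary extension of `F` contains an idempotent element. -/
def HasIdemElemExtension (F : Type u) [iF : L.Structure F] : Prop :=
  ∃ (G : Type u) (iG : L.Structure G),
    Nonempty (@Language.ElementaryEmbedding L F G iF iG) ∧ ∃ e : G, @IsIdemElem L G iG e

/-- `r` is a `Q`-congruence of `S`: the kernel of a homomorphism into a member of `Q`
(equivalently, a congruence with quotient in `Q`). -/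
def IsQCong (Q : ∀ M : Type u, L.Structure M → Prop) (S : Type u) [iS : L.Structure S]
    (r : S → S → Prop) : Prop :=
  ∃ (A : Type u) (iA : L.Structure A), Q A iA ∧
    ∃ h : @Language.Hom L S A iS iA, ∀ a b, r a b ↔ h.toFun a = h.toFun b

/-- `S` is `Q`-simple: nontrivial, in `Q`, and its only `Q`-congruences are equality and the
total relation. -/
def IsQSimple (Q : ∀ M : Type u, L.Structure M → Prop) (S : Type u) [iS : L.Structure S] : Prop :=
  Nontrivial S ∧ Q S iS ∧
    ∀ r : S → S → Prop, IsQCong Q S r → (∀ a b, r a b ↔ a = b) ∨ (∀ a b, r a b)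

/-- `S` is `Q`-subdirectly irreducible: equality is completely meet-irreducible among the
`Q`-congruences of `S`. -/
def IsQSubdirectlyIrreducible (Q : ∀ M : Type u, L.Structure M → Prop)
    (S : Type u) [iS : L.Structure S] : Prop :=
  Nontrivial S ∧ Q S iS ∧
    ∀ (ι : Type u) (R : ι → S → S → Prop), (∀ i, IsQCong Q S (R i)) →
      (∀ a b, ((∀ i, R i a b) ↔ a = b)) → ∃ i, ∀ a b, R i a b ↔ a = b

/-- `Q` is semisimple: all `Q`-subdirectly irreducible algebras are `Q`-simple. -/
def IsSemisimple (Q : ∀ M : Type u, L.Structure M → Prop) : Prop :=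
  ∀ (S : Type u) (iS : L.Structure S),
    @IsQSubdirectlyIrreducible L Q S iS → @IsQSimple L Q S iS

def SubclassOf (Q' Q : ∀ M : Type u, L.Structure M → Prop) : Prop :=
  ∀ (M : Type u) (iM : L.Structure M), Q' M iM → Q M iM

/-- A minimal quasivariety: nontrivial, and every subquasivariety is trivial or the whole class. -/
def IsMinimalQuasivariety (Q : ∀ M : Type u, L.Structure M → Prop) : Prop :=
  (∃ (M : Type u) (iM : L.Structure M), Q M iM ∧ Nontrivial M) ∧
    ∀ Q' : ∀ M : Type u, L.Structure M → Prop, IsQuasivariety Q' → SubclassOf Q' Q →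
      (∀ (M : Type u) (iM : L.Structure M), Q' M iM → Subsingleton M) ∨
        (∀ (M : Type u) (iM : L.Structure M), Q M iM ↔ Q' M iM)

/-- A minimal variety: nontrivial, and every subvariety is trivial or the whole class. -/
def IsMinimalVariety (V : ∀ M : Type u, L.Structure M → Prop) : Prop :=
  (∃ (M : Type u) (iM : L.Structure M), V M iM ∧ Nontrivial M) ∧
    ∀ V' : ∀ M : Type u, L.Structure M → Prop, IsVariety V' → SubclassOf V' V →
      (∀ (M : Type u) (iM : L.Structure M), V' M iM → Subsingleton M) ∨
        (∀ (M : Type u) (iM : L.Structure M), V M iM ↔ V' M iM)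

/-- `t` interprets as the discriminator operation on `M`. -/
def IsDiscrTermOn (t : L.Term (Fin 3)) (M : Type u) [L.Structure M] : Prop :=
  ∀ a b c : M, (a ≠ b → t.realize ![a, b, c] = a) ∧ (a = b → t.realize ![a, b, c] = c)

/-- `V` is the variety generated by the class `K`. -/
def IsVarietyGeneratedBy (V K : ∀ M : Type u, L.Structure M → Prop) : Prop :=
  IsVariety V ∧ SubclassOf K V ∧ ∀ W, IsVariety W → SubclassOf K W → SubclassOf V W

/-- A discriminator variety: generated by a class of algebras with a common discriminator term. -/
def IsDiscriminatorVariety (V : ∀ M : Type u, L.Structure M → Prop) : Prop :=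
  ∃ (K : ∀ M : Type u, L.Structure M → Prop) (t : L.Term (Fin 3)),
    (∀ (M : Type u) (iM : L.Structure M), K M iM → @IsDiscrTermOn L t M iM) ∧
      IsVarietyGeneratedBy V K

/-- A congruence of an algebra. -/
def IsCongruence (M : Type u) [L.Structure M] (r : M → M → Prop) : Prop :=
  Equivalence r ∧ ∀ (m : ℕ) (f : L.Functions m) (a b : Fin m → M),
    (∀ i, r (a i) (b i)) → r (Structure.funMap f a) (Structure.funMap f b)

/-- A simple algebra: nontrivial with only trivial congruences. -/
def IsSimpleAlg (M : Type u) [L.Structure M] : Prop :=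
  Nontrivial M ∧ ∀ r : M → M → Prop, IsCongruence (L := L) M r →
    (∀ a b, r a b ↔ a = b) ∨ (∀ a b, r a b)

/-- `P` is `Q`-finitely presented: presented in `Q` by finitely many generators `v` and
finitely many relations `lhs i ≐ rhs i`. -/
def IsQFinPresented (Q : ∀ M : Type u, L.Structure M → Prop)
    (P : Type u) [iP : L.Structure P] : Prop :=
  Q P iP ∧ ∃ (k n : ℕ) (lhs rhs : Fin n → L.Term (Fin k)) (v : Fin k → P),
    (∀ i, (lhs i).realize v = (rhs i).realize v) ∧
    ∀ (A : Type u) (iA : L.Structure A), Q A iA → ∀ x : Fin k → A,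
      (∀ i, @Term.realize L A iA (Fin k) x (lhs i) = @Term.realize L A iA (Fin k) x (rhs i)) →
        ∃! h : @Language.Hom L P A iP iA, ∀ j, h.toFun (v j) = x j

/-- The coordinatewise structure on a direct product of algebras. -/
def piStruct {ι : Type u} {M : ι → Type u} (iM : ∀ i, L.Structure (M i)) :
    L.Structure (∀ i, M i) where
  funMap := fun {m} f x i => @Structure.funMap L (M i) (iM i) m f (fun j => x j i)
  RelMap := fun {m} r x => ∀ i, @Structure.RelMap L (M i) (iM i) m r (fun j => x j i)

instance piStructure {ι : Type u} {M : ι → Type u} [∀ i, L.Structure (M i)] :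
    L.Structure (∀ i, M i) :=
  piStruct fun i => inferInstance
namespace Stmt12

open FirstOrder Language Structure

variable {L : FirstOrder.Language.{u, u}}

/-- Validity of an identity in every member of a class `K`. -/
def EK (K : ∀ M : Type u, L.Structure M → Prop) (e : EqId L) : Prop :=
  ∀ (C : Type u) (iC : L.Structure C), K C iC → @EqId.Holds L e C iC

/-- A generated variety is exactly the class of models of the identities of the generators. -/
theorem mem_iff_EK {V K : ∀ M : Type u, L.Structure M → Prop}
    (hG : IsVarietyGeneratedBy V K) (M : Type u) (iM : L.Structure M) :
    V M iM ↔ ∀ e : EqId L, EK K e → @EqId.Holds L e M iM := by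
  obtain ⟨⟨S, hS⟩, hKV, hmin⟩ := hG
  constructor
  · intro hM e he
    have hW : IsVariety (fun (N : Type u) (iN : L.Structure N) =>
        ∀ e : EqId L, EK K e → @EqId.Holds L e N iN) :=
      ⟨{e | EK K e}, fun N iN => Iff.rfl⟩
    exact hmin _ hW (fun N iN hN e he => he N iN hN) M iM hM e he
  · intro h
    rw [hS]
    intro e heS
    exact h e (fun C iC hC => (hS C iC).mp (hKV C iC hC) e heS)

section Terms

variable (w : L.Term (Fin 3))

/-- Apply a ternary term to three terms. -/
def app3 {α : Type v} (a b c : L.Term α) : L.Term α :=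
  w.subst ![a, b, c]

theorem realize_app3 {α : Type v} (a b c : L.Term α) {M : Type u} [L.Structure M]
    (v : α → M) :
    (app3 w a b c).realize v = w.realize ![a.realize v, b.realize v, c.realize v] := by
  rw [app3, Term.realize_subst]
  congr 1
  funext i
  fin_cases i <;> simp

/-- The switching term: `sw(p,q,a,b) = a` if `p = q`, else `b` (on discriminator algebras). -/
def swt {α : Type v} (p q a b : L.Term α) : L.Term α :=
  app3 w (app3 w p q a) (app3 w p q b) b

/-- The chain term encoding `(⋀ sᵢ ≈ tᵢ) ? u : v` on discriminator algebras. -/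
def chain {α : Type v} : ∀ {n : ℕ}, (Fin n → L.Term α) → (Fin n → L.Term α) →
    L.Term α → L.Term α → L.Term α
  | 0, _, _, u, _ => u
  | _ + 1, s, t, u, v =>
    swt w (s 0) (t 0) (chain (fun i => s i.succ) (fun i => t i.succ) u v) v

section Eval

variable {M : Type u} [L.Structure M]

theorem discr_id1 (hd : @IsDiscrTermOn L w M _) (a c : M) : w.realize ![a, a, c] = c :=
  (hd a a c).2 rfl

theorem discr_id3 (hd : @IsDiscrTermOn L w M _) (a b : M) : w.realize ![a, b, b] = a := by
  by_cases h : a = b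
  · rw [(hd a b b).2 h, h]
  · exact (hd a b b).1 h

variable {α : Type v} {v : α → M}

theorem swt_realize_eq (hid1 : ∀ a c : M, w.realize ![a, a, c] = c)
    (hid3 : ∀ a b : M, w.realize ![a, b, b] = a)
    {p q a b : L.Term α} (h : p.realize v = q.realize v) :
    (swt w p q a b).realize v = a.realize v := by
  rw [swt, realize_app3, realize_app3, realize_app3, h, hid1, hid1, hid3]

theorem swt_realize_ne (hd : @IsDiscrTermOn L w M _)
    {p q a b : L.Term α} (h : p.realize v ≠ q.realize v) :
    (swt w p q a b).realize v = b.realize v := by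
  rw [swt, realize_app3, realize_app3, realize_app3,
    (hd _ _ _).1 h, (hd _ _ _).1 h, discr_id1 w hd]

theorem chain_realize_eq (hid1 : ∀ a c : M, w.realize ![a, a, c] = c)
    (hid3 : ∀ a b : M, w.realize ![a, b, b] = a)
    {n : ℕ} {s t : Fin n → L.Term α} {u uv : L.Term α}
    (h : ∀ i, (s i).realize v = (t i).realize v) :
    (chain w s t u uv).realize v = u.realize v := by
  induction n with
  | zero => rfl
  | succ n ih =>
    rw [chain, swt_realize_eq w hid1 hid3 (h 0)]
    exact ih (fun i => h i.succ)

theorem chain_realize_ne (hd : @IsDiscrTermOn L w M _)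
    {n : ℕ} {s t : Fin n → L.Term α} {u uv : L.Term α}
    (h : ∃ i, (s i).realize v ≠ (t i).realize v) :
    (chain w s t u uv).realize v = uv.realize v := by
  induction n with
  | zero => exact (h.choose).elim0
  | succ n ih =>
    by_cases h0 : (s 0).realize v = (t 0).realize v
    · rw [chain, swt_realize_eq w (discr_id1 w hd) (discr_id3 w hd) h0]
      apply ih
      obtain ⟨i, hi⟩ := h
      rcases Fin.eq_zero_or_eq_succ i with rfl | ⟨j, rfl⟩
      · exact absurd h0 hi
      · exact ⟨j, hi⟩
    · rw [chain, swt_realize_ne w hd h0]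

end Eval

/-- Substitution commutes with `app3`. -/
theorem subst_app3 {α β : Type u} (a b c : L.Term α) (σ : α → L.Term β) :
    (app3 w a b c).subst σ = app3 w (a.subst σ) (b.subst σ) (c.subst σ) := by
  rw [app3, app3]
  induction w with
  | var i => fin_cases i <;> simp [Term.subst]
  | func f ts ih => simp only [Term.subst]; congr 1; funext j; exact ih j

theorem subst_swt {α β : Type u} (p q a b : L.Term α) (σ : α → L.Term β) :
    (swt w p q a b).subst σ = swt w (p.subst σ) (q.subst σ) (a.subst σ) (b.subst σ) := by
  rw [swt, subst_app3, subst_app3, subst_app3, swt]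

theorem subst_chain {α β : Type u} {n : ℕ} (s t : Fin n → L.Term α) (u v : L.Term α)
    (σ : α → L.Term β) :
    (chain w s t u v).subst σ = chain w (fun i => (s i).subst σ) (fun i => (t i).subst σ)
      (u.subst σ) (v.subst σ) := by
  induction n with
  | zero => rfl
  | succ n ih => rw [chain, subst_swt, ih, chain]

end Terms

end Stmt12
namespace Stmt12

open FirstOrder Language Structure

variable {L : FirstOrder.Language.{u, u}}

section Sub

variable (halg : L.IsAlgebraic) {M : Type u} [iM : L.Structure M]

/-- The structure on a subset closed under the operations. -/
def subStruct (S : Set M)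
    (hS : ∀ (n : ℕ) (f : L.Functions n) (x : Fin n → M), (∀ i, x i ∈ S) →
      Structure.funMap f x ∈ S) : L.Structure S where
  funMap := fun {n} f x => ⟨Structure.funMap f fun i => (x i : M), hS n f _ (fun i => (x i).2)⟩
  RelMap := fun {n} r _ => (halg n).elim r

theorem subStruct_realize (S : Set M) (hS : ∀ (n : ℕ) (f : L.Functions n) (x : Fin n → M),
    (∀ i, x i ∈ S) → Structure.funMap f x ∈ S)
    {α : Type v} (p : L.Term α) (v : α → S) :
    ((@Term.realize L S (subStruct halg S hS) α v p : S) : M) =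
      p.realize (fun a => (v a : M)) := by
  induction p with
  | var => rfl
  | func f ts ih =>
    show ((@Structure.funMap L S (subStruct halg S hS) _ f _ : S) : M) = _
    rw [Term.realize]
    exact congrArg (Structure.funMap f) (funext fun i => ih i)

/-- The inclusion homomorphism of a closed subset. -/
def subIncl (S : Set M) (hS : ∀ (n : ℕ) (f : L.Functions n) (x : Fin n → M),
    (∀ i, x i ∈ S) → Structure.funMap f x ∈ S) :
    letI := subStruct halg S hS
    S →[L] M :=
  letI := subStruct halg S hS
  { toFun := Subtype.val
    map_fun' := fun _ _ => rfl
    map_rel' := fun r _ _ => (halg _).elim r }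

/-- A closed subset of a member of `V`, as a structure, is again in `V`. -/
theorem subStruct_mem {V K : ∀ M : Type u, L.Structure M → Prop}
    (hG : IsVarietyGeneratedBy V K) (hM : V M iM) (S : Set M)
    (hS : ∀ (n : ℕ) (f : L.Functions n) (x : Fin n → M), (∀ i, x i ∈ S) →
      Structure.funMap f x ∈ S) : V S (subStruct halg S hS) := by
  rw [mem_iff_EK hG]
  intro e he x
  have hMe : @EqId.Holds L e M iM := (mem_iff_EK hG M iM).mp hM e he
  have h1 := subStruct_realize halg S hS (α := Fin e.k) e.lhs x
  have h2 := subStruct_realize halg S hS (α := Fin e.k) e.rhs x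
  apply Subtype.ext
  rw [h1, h2]
  exact hMe _

end Sub

section Free

variable {V K : ∀ M : Type u, L.Structure M → Prop}
variable {F : Type u} [iF : L.Structure F] {g : ℕ → F}

/-- Every element of the free algebra is a term value at the generators. -/
theorem free_gen (halg : L.IsAlgebraic) (hG : IsVarietyGeneratedBy V K)
    (hF : IsFreeAlgOn V F g) :
    ∀ a : F, ∃ (m : ℕ) (p : L.Term (Fin m)),
    a = p.realize (fun i : Fin m => g i.val) := by
  classical
  set S : Set F := {a | ∃ (m : ℕ) (p : L.Term (Fin m)),
    a = p.realize (fun i : Fin m => g i.val)} with hSdef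
  have hS : ∀ (n : ℕ) (f : L.Functions n) (x : Fin n → F), (∀ i, x i ∈ S) →
      Structure.funMap f x ∈ S := by
    intro n f x hx
    choose m p hp using hx
    refine ⟨Finset.univ.sup m, Term.func f
      (fun i => (p i).relabel (Fin.castLE (Finset.le_sup (Finset.mem_univ i)))), ?_⟩
    rw [Term.realize]
    refine congrArg (Structure.funMap f) (funext fun i => ?_)
    rw [hp i, Term.realize_relabel]
    rfl
  letI iS : L.Structure S := subStruct halg S hS
  have hgS : ∀ n : ℕ, g n ∈ S := fun n =>
    ⟨n + 1, Term.var ⟨n, Nat.lt_succ_self n⟩, rfl⟩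
  have hVS : V S iS := subStruct_mem halg hG hF.1 S hS
  obtain ⟨h, hh, -⟩ := hF.2.2 S iS hVS (fun n => ⟨g n, hgS n⟩)
  obtain ⟨h₀, -, huniq⟩ := hF.2.2 F iF hF.1 g
  have hcomp : (subIncl halg S hS).comp h = Language.Hom.id L F := by
    rw [huniq ((subIncl halg S hS).comp h) ?_, huniq (Language.Hom.id L F) ?_]
    · intro m; rfl
    · intro m
      exact congrArg Subtype.val (hh m)
  intro a
  have ha : ((subIncl halg S hS).comp h).toFun a = a := by rw [hcomp]; rfl
  have ha' : (h.toFun a : F) = a := ha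
  rw [← ha']
  exact (h.toFun a).2

/-- Tuple version of `free_gen`. -/
theorem free_gen_tuple (halg : L.IsAlgebraic) (hG : IsVarietyGeneratedBy V K)
    (hF : IsFreeAlgOn V F g) {k : ℕ} (x : Fin k → F) :
    ∃ (m : ℕ) (p : Fin k → L.Term (Fin m)), ∀ j,
      x j = (p j).realize (fun i : Fin m => g i.val) := by
  classical
  choose m p hp using fun j => free_gen halg hG hF (x j)
  refine ⟨Finset.univ.sup m,
    fun j => (p j).relabel (Fin.castLE (Finset.le_sup (Finset.mem_univ j))), fun j => ?_⟩
  rw [hp j, Term.realize_relabel]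
  rfl

/-- An equation between term values at the generators of `F` is an identity of `K`. -/
theorem EK_of_eq_at_gen (hG : IsVarietyGeneratedBy V K) (hF : IsFreeAlgOn V F g)
    (c₀ : L.Constants) {m : ℕ} {p q : L.Term (Fin m)}
    (h : p.realize (fun i : Fin m => g i.val) = q.realize (fun i : Fin m => g i.val)) :
    EK K ⟨m, p, q⟩ := by
  classical
  intro C iC hC x
  have hCV : V C iC := hG.2.1 C iC hC
  obtain ⟨h', hh', -⟩ := hF.2.2 C iC hCV
    (fun n => if hn : n < m then x ⟨n, hn⟩ else (c₀ : C))
  have hx : ∀ i : Fin m, h' (g i.val) = x i := by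
    intro i
    show h'.toFun (g i.val) = x i
    rw [hh' i.val, dif_pos i.isLt]
  have key : ∀ r : L.Term (Fin m),
      r.realize x = h' (r.realize (fun i : Fin m => g i.val)) := by
    intro r
    have hre := HomClass.realize_term (L := L) h' (t := r)
      (v := fun i : Fin m => g i.val)
    rw [← hre]
    exact congrArg (fun v => Term.realize v r) (funext fun i => (hx i).symm)
  rw [key p, key q, h]

end Free

end Stmt12
namespace Stmt12

open FirstOrder Language Structure

variable {L : FirstOrder.Language.{u, u}}
variable {V K : ∀ M : Type u, L.Structure M → Prop} {w : L.Term (Fin 3)}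
variable {F : Type u} [iF : L.Structure F] {g : ℕ → F}

/-- The two basic discriminator identities hold in every member of `K`. -/
theorem EK_id1 (hKd : ∀ (M : Type u) (iM : L.Structure M), K M iM → @IsDiscrTermOn L w M iM) :
    EK K ⟨2, app3 w (.var 0) (.var 0) (.var 1), .var 1⟩ := by
  intro C iC hC y
  show (app3 w (.var 0) (.var 0) (.var 1)).realize y = (Term.var 1).realize y
  rw [realize_app3]
  exact (hKd C iC hC (y 0) (y 0) (y 1)).2 rfl

theorem EK_id3 (hKd : ∀ (M : Type u) (iM : L.Structure M), K M iM → @IsDiscrTermOn L w M iM) :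
    EK K ⟨2, app3 w (.var 0) (.var 1) (.var 1), .var 0⟩ := by
  intro C iC hC y
  show (app3 w (.var 0) (.var 1) (.var 1)).realize y = (Term.var 0).realize y
  rw [realize_app3]
  exact discr_id3 w (hKd C iC hC) (y 0) (y 1)

theorem mem_id1 (hKd : ∀ (M : Type u) (iM : L.Structure M), K M iM → @IsDiscrTermOn L w M iM)
    (hG : IsVarietyGeneratedBy V K) {N : Type u} {iN : L.Structure N} (hN : V N iN) :
    ∀ a c : N, @Term.realize L N iN _ ![a, a, c] w = c := by
  intro a c
  have h1 := (mem_iff_EK hG N iN).mp hN _ (EK_id1 hKd) ![a, c]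
  rw [show (⟨2, app3 w (.var 0) (.var 0) (.var 1), .var 1⟩ : EqId L).lhs
      = app3 w (.var 0) (.var 0) (.var 1) from rfl] at h1
  rw [realize_app3] at h1
  simpa using h1

theorem mem_id3 (hKd : ∀ (M : Type u) (iM : L.Structure M), K M iM → @IsDiscrTermOn L w M iM)
    (hG : IsVarietyGeneratedBy V K) {N : Type u} {iN : L.Structure N} (hN : V N iN) :
    ∀ a b : N, @Term.realize L N iN _ ![a, b, b] w = a := by
  intro a b
  have h1 := (mem_iff_EK hG N iN).mp hN _ (EK_id3 hKd) ![a, b]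
  rw [show (⟨2, app3 w (.var 0) (.var 1) (.var 1), .var 0⟩ : EqId L).lhs
      = app3 w (.var 0) (.var 1) (.var 1) from rfl] at h1
  rw [realize_app3] at h1
  simpa using h1

theorem subst_constants {α β : Type v} (c : L.Constants) (σ : α → L.Term β) :
    (Constants.term c : L.Term α).subst σ = c.term := by
  rw [Constants.term, Constants.term, Term.subst]
  congr 1
  funext i
  exact i.elim0

/-- The key minimality dichotomy. -/
theorem min_dichotomy (hG : IsVarietyGeneratedBy V K) (hmin : IsMinimalVariety V)
    (T : Set (EqId L)) :
    (∀ (N : Type u) (iN : L.Structure N), V N iN →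
        (∀ e ∈ T, @EqId.Holds L e N iN) → Subsingleton N) ∨ (∀ e ∈ T, EK K e) := by
  rcases hmin.2 (fun N iN => ∀ e ∈ ({e | EK K e} ∪ T : Set (EqId L)), @EqId.Holds L e N iN)
      ⟨_, fun N iN => Iff.rfl⟩
      (fun N iN hN => (mem_iff_EK hG N iN).mpr (fun e he => hN e (Or.inl he))) with hl | hr
  · left
    intro N iN hNV hNT
    refine hl N iN (fun e he => ?_)
    rcases he with he | he
    · exact (mem_iff_EK hG N iN).mp hNV e he
    · exact hNT e he
  · right
    intro e he C iC hC
    exact (hr C iC).mp (hG.2.1 C iC hC) e (Or.inr he)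

end Stmt12
namespace Stmt12

open FirstOrder Language Structure

variable {L : FirstOrder.Language.{u, u}}
variable {V K : ∀ M : Type u, L.Structure M → Prop} {w : L.Term (Fin 3)}
variable {F : Type u} [iF : L.Structure F] {g : ℕ → F}

theorem min_of_sc (halg : L.IsAlgebraic)
    (hKd : ∀ (M : Type u) (iM : L.Structure M), K M iM → @IsDiscrTermOn L w M iM)
    (hG : IsVarietyGeneratedBy V K) (hF : IsFreeAlgOn V F g)
    (c₀ c₁ : L.Constants) (hcF : (c₀ : F) ≠ (c₁ : F))
    (hSC : IsSC V F) : IsMinimalVariety V := by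
  classical
  -- consequence of SC: constants are distinct in every nontrivial member
  have hq : ∀ (N : Type u) (iN : L.Structure N), V N iN → (c₀ : N) = (c₁ : N) →
      ∀ a b : N, a = b := by
    intro N iN hN hcc a b
    have hqF : @QuasiId.Holds L
        ⟨2, 1, fun _ => c₀.term, fun _ => c₁.term, .var 0, .var 1⟩ F iF := by
      intro y hy
      exfalso
      have h0 : (c₀.term : L.Term (Fin 2)).realize y
          = (c₁.term : L.Term (Fin 2)).realize y := hy 0
      rw [Term.realize_constants, Term.realize_constants] at h0
      exact hcF h0
    have hNq := hSC _ hqF N iN hN ![a, b] (fun i => by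
      have hcc' : (c₀.term : L.Term (Fin 2)).realize ![a, b]
          = (c₁.term : L.Term (Fin 2)).realize ![a, b] := by
        rw [Term.realize_constants, Term.realize_constants]
        exact hcc
      exact hcc')
    simpa using hNq
  constructor
  · exact ⟨F, iF, hF.1, ⟨(c₀ : F), (c₁ : F), hcF⟩⟩
  · intro V' hV' hsub
    obtain ⟨S', hS'⟩ := hV'
    by_cases htriv : ∀ (N : Type u) (iN : L.Structure N), V' N iN → Subsingleton N
    · exact Or.inl htriv
    · right
      push_neg at htriv
      obtain ⟨A, iA, hA', hnA⟩ := htriv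
      obtain ⟨a₀, b₀, hab⟩ := hnA
      have hAV : V A iA := hsub A iA hA'
      have hax : ∀ e' ∈ S', EK K e' := by
        intro e' he'
        by_contra hne
        simp only [EK, not_forall] at hne
        obtain ⟨C, iC, hC, hnH⟩ := hne
        simp only [EqId.Holds, not_forall] at hnH
        obtain ⟨z, hlr⟩ := hnH
        have hdC := hKd C iC hC
        by_cases hsolv : ∃ y : Fin e'.k → F,
            (swt w e'.lhs e'.rhs c₀.term c₁.term).realize y = (c₁ : F)
        · obtain ⟨y, hy⟩ := hsolv
          obtain ⟨m, p, hp⟩ := free_gen_tuple halg hG hF y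
          have hgeq : ((swt w e'.lhs e'.rhs c₀.term c₁.term).subst p).realize
                (fun i : Fin m => g i.val)
              = (c₁.term : L.Term (Fin m)).realize (fun i : Fin m => g i.val) := by
            rw [Term.realize_subst, Term.realize_constants]
            rw [show (fun j => (p j).realize (fun i : Fin m => g i.val)) = y
              from funext fun j => (hp j).symm]
            exact hy
          have hEKst := EK_of_eq_at_gen hG hF c₀ hgeq
          have hstA : ((swt w e'.lhs e'.rhs c₀.term c₁.term).subst p).realize
                (fun _ : Fin m => (c₀ : A))
              = (c₁.term : L.Term (Fin m)).realize (fun _ : Fin m => (c₀ : A)) :=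
            (mem_iff_EK hG A iA).mp hAV _ hEKst (fun _ => (c₀ : A))
          rw [Term.realize_subst, Term.realize_constants] at hstA
          have he'A : e'.lhs.realize (fun j => (p j).realize (fun _ : Fin m => (c₀ : A)))
              = e'.rhs.realize (fun j => (p j).realize (fun _ : Fin m => (c₀ : A))) :=
            (hS' A iA).mp hA' e' he' _
          rw [swt_realize_eq w (mem_id1 hKd hG hAV) (mem_id3 hKd hG hAV) he'A,
            Term.realize_constants] at hstA
          exact hab (hq A iA hAV hstA a₀ b₀)
        · set q₅ : QuasiId L := ⟨e'.k + 2, 1,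
            fun _ => (swt w e'.lhs e'.rhs c₀.term c₁.term).relabel (Fin.castAdd 2),
            fun _ => c₁.term, .var ((Fin.last e'.k).castSucc), .var (Fin.last (e'.k + 1))⟩
            with hq₅
          have hq₅F : q₅.Holds F := by
            intro y hy
            exfalso
            have h0 : ((swt w e'.lhs e'.rhs c₀.term c₁.term).relabel
                  (Fin.castAdd 2)).realize y
                = (c₁.term : L.Term (Fin (e'.k + 2))).realize y := hy 0
            rw [Term.realize_relabel, Term.realize_constants] at h0
            exact hsolv ⟨y ∘ Fin.castAdd 2, h0⟩
          have hq₅C := hSC _ hq₅F C iC (hG.2.1 C iC hC)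
          set zz : Fin (e'.k + 2) → C :=
            Fin.snoc (Fin.snoc z (e'.lhs.realize z)) (e'.rhs.realize z) with hzz
          have hzc : zz ∘ Fin.castAdd 2 = z := by
            funext j
            show zz (Fin.castAdd 2 j) = z j
            have hcast : (Fin.castAdd 2 j : Fin (e'.k + 2)) = (j.castSucc).castSucc :=
              Fin.ext rfl
            rw [hzz, hcast, Fin.snoc_castSucc, Fin.snoc_castSucc]
          have hprem1 : ((swt w e'.lhs e'.rhs c₀.term c₁.term).relabel
                (Fin.castAdd 2)).realize zz
              = (c₁.term : L.Term (Fin (e'.k + 2))).realize zz := by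
            rw [Term.realize_relabel, hzc, swt_realize_ne w hdC hlr,
              Term.realize_constants, Term.realize_constants]
          have hpre := hq₅C zz (fun _ => hprem1)
          have hcl : q₅.cl.realize zz = e'.lhs.realize z := by
            show zz ((Fin.last e'.k).castSucc) = _
            rw [hzz, Fin.snoc_castSucc, Fin.snoc_last]
          have hcr : q₅.cr.realize zz = e'.rhs.realize z := by
            show zz (Fin.last (e'.k + 1)) = _
            rw [hzz, Fin.snoc_last]
          rw [hcl, hcr] at hpre
          exact hlr hpre
      intro N iN
      constructor
      · intro hN
        exact (hS' N iN).mpr (fun e' he' => (mem_iff_EK hG N iN).mp hN e' (hax e' he'))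
      · exact hsub N iN

end Stmt12
namespace Stmt12

open FirstOrder Language Structure

variable {L : FirstOrder.Language.{u, u}}
variable {V K : ∀ M : Type u, L.Structure M → Prop} {w : L.Term (Fin 3)}
variable {F : Type u} [iF : L.Structure F] {g : ℕ → F}

theorem sc_of_min (halg : L.IsAlgebraic)
    (hKd : ∀ (M : Type u) (iM : L.Structure M), K M iM → @IsDiscrTermOn L w M iM)
    (hG : IsVarietyGeneratedBy V K) (hF : IsFreeAlgOn V F g)
    (c₀ c₁ : L.Constants) (hcF : (c₀ : F) ≠ (c₁ : F))
    (hmin : IsMinimalVariety V) : IsSC V F := by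
  classical
  intro q hqF M iM hMV x hx
  -- Main claim : the chain identity associated with `q` is an identity of `K`.
  have hchainEK : EK K ⟨q.k, chain w q.lhs q.rhs q.cl q.cr, q.cr⟩ := by
    intro A iA hA x₀
    have hdA := hKd A iA hA
    have hAV : V A iA := hG.2.1 A iA hA
    show (chain w q.lhs q.rhs q.cl q.cr).realize x₀ = q.cr.realize x₀
    by_cases hall : ∀ i, (q.lhs i).realize x₀ = (q.rhs i).realize x₀
    · have hid1A := mem_id1 hKd hG hAV
      have hid3A := mem_id3 hKd hG hAV
      rw [chain_realize_eq w hid1A hid3A hall]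
      -- goal : q.cl.realize x₀ = q.cr.realize x₀
      by_cases htriv : ∀ a b : A, a = b
      · exact htriv _ _
      push_neg at htriv
      obtain ⟨a₀, b₀, hab⟩ := htriv
      -- Step 1 : the constants are distinct in A
      have hcA : (c₀ : A) ≠ (c₁ : A) := by
        intro hcc
        rcases min_dichotomy hG hmin {(⟨0, c₀.term, c₁.term⟩ : EqId L)} with hl | hr
        · have hsub : Subsingleton A := by
            refine hl A iA hAV (fun e he => ?_)
            rw [Set.mem_singleton_iff] at he
            subst he
            intro y
            have : (c₀.term : L.Term (Fin 0)).realize y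
                = (c₁.term : L.Term (Fin 0)).realize y := by
              rw [Term.realize_constants, Term.realize_constants]
              exact hcc
            exact this
          exact hab (Subsingleton.elim a₀ b₀)
        · have hFe : (c₀.term : L.Term (Fin 0)).realize (Fin.elim0 : Fin 0 → F)
              = (c₁.term : L.Term (Fin 0)).realize (Fin.elim0 : Fin 0 → F) :=
            (mem_iff_EK hG F iF).mp hF.1 _ (hr _ rfl) Fin.elim0
          rw [Term.realize_constants, Term.realize_constants] at hFe
          exact hcF hFe
      -- Step 2 : the premises have a closed-term solution modulo the identities of K
      have hsol : ∃ wcl : Fin q.k → L.Term (Fin 0),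
          ∀ i, EK K ⟨0, (q.lhs i).subst wcl, (q.rhs i).subst wcl⟩ := by
        by_contra hns
        push_neg at hns
        -- (a) : any member of V with a solution of the substituted premises is trivial
        have ha : ∀ (wcl : Fin q.k → L.Term (Fin 0)) (C : Type u) (iC : L.Structure C),
            V C iC → (∀ i : Fin q.n,
              @Term.realize L C iC (Fin 0) (fun i0 => i0.elim0) ((q.lhs i).subst wcl)
              = @Term.realize L C iC (Fin 0) (fun i0 => i0.elim0) ((q.rhs i).subst wcl)) →
            Subsingleton C := by
          intro wcl C iC hCV hE
          letI := iC
          rcases min_dichotomy hG hmin (Set.range fun i : Fin q.n =>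
              (⟨0, (q.lhs i).subst wcl, (q.rhs i).subst wcl⟩ : EqId L)) with hl | hr
          · refine hl C iC hCV ?_
            rintro e ⟨i, rfl⟩
            intro y
            have hy : y = fun i0 : Fin 0 => i0.elim0 := funext fun i0 => i0.elim0
            rw [hy]
            exact hE i
          · obtain ⟨i, hi⟩ := hns wcl
            exact absurd (hr _ ⟨i, rfl⟩) hi
        -- (b) : the closed chain identity is an identity of K
        have hb : ∀ wcl : Fin q.k → L.Term (Fin 0),
            EK K ⟨0, (chain w q.lhs q.rhs c₀.term c₁.term).subst wcl, c₁.term⟩ := by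
          intro wcl C iC hC y
          letI := iC
          have hdC := hKd C iC hC
          show ((chain w q.lhs q.rhs c₀.term c₁.term).subst wcl).realize y
            = (c₁.term : L.Term (Fin 0)).realize y
          rw [Term.realize_subst, Term.realize_constants]
          by_cases hE : ∀ i, (q.lhs i).realize (fun a => (wcl a).realize y)
              = (q.rhs i).realize (fun a => (wcl a).realize y)
          · have hCt : Subsingleton C := by
              refine ha wcl C iC (hG.2.1 C iC hC) (fun i => ?_)
              rw [Term.realize_subst, Term.realize_subst]
              have hpt : (fun a : Fin q.k => (wcl a).realize (fun i0 : Fin 0 => i0.elim0))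
                  = fun a => (wcl a).realize y := by
                have : (fun i0 : Fin 0 => i0.elim0) = y := funext fun i0 => i0.elim0
                rw [this]
              rw [hpt]
              exact hE i
            exact Subsingleton.elim _ _
          · push_neg at hE
            rw [chain_realize_ne w hdC hE]
            exact Term.realize_constants
        -- (c) : build the minimal subalgebra of F and show the chain identity holds there
        set S₀ : Set F := {a | ∃ p : L.Term (Fin 0), a = p.realize (Fin.elim0 : Fin 0 → F)}
          with hS₀def
        have hS₀ : ∀ (n : ℕ) (f : L.Functions n) (y : Fin n → F), (∀ i, y i ∈ S₀) →
            Structure.funMap f y ∈ S₀ := by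
          intro n f y hy
          choose p hp using hy
          refine ⟨Term.func f p, ?_⟩
          rw [Term.realize]
          exact congrArg (Structure.funMap f) (funext fun i => hp i)
        letI iS₀ : L.Structure S₀ := subStruct halg S₀ hS₀
        have hVS₀ : V S₀ iS₀ := subStruct_mem halg hG hF.1 S₀ hS₀
        have hc₀S : (c₀ : F) ∈ S₀ := ⟨c₀.term, (Term.realize_constants).symm⟩
        have hc₁S : (c₁ : F) ∈ S₀ := ⟨c₁.term, (Term.realize_constants).symm⟩
        -- e* holds in S₀
        have hS₀e : @EqId.Holds L
            ⟨q.k, chain w q.lhs q.rhs c₀.term c₁.term, c₁.term⟩ S₀ iS₀ := by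
          intro xs
          apply Subtype.ext
          have h1 := subStruct_realize halg S₀ hS₀ (α := Fin q.k)
            (chain w q.lhs q.rhs c₀.term c₁.term) xs
          have h2 := subStruct_realize halg S₀ hS₀ (α := Fin q.k)
            (Constants.term c₁ : L.Term (Fin q.k)) xs
          show ((@Term.realize L S₀ iS₀ (Fin q.k) xs (chain w q.lhs q.rhs c₀.term c₁.term) : S₀) : F)
            = ((@Term.realize L S₀ iS₀ (Fin q.k) xs (Constants.term c₁ : L.Term (Fin q.k)) : S₀) : F)
          rw [h1, h2]
          choose wcl hwcl using fun j => (xs j).2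
          rw [show (fun a => ((xs a : F))) = fun j => (wcl j).realize (Fin.elim0 : Fin 0 → F)
            from funext fun j => hwcl j]
          have hclosed : ((chain w q.lhs q.rhs c₀.term c₁.term).subst wcl).realize
                (Fin.elim0 : Fin 0 → F)
              = (c₁.term : L.Term (Fin 0)).realize (Fin.elim0 : Fin 0 → F) :=
            (mem_iff_EK hG F iF).mp hF.1 _ (hb wcl) Fin.elim0
          rw [Term.realize_subst, Term.realize_constants] at hclosed
          rw [hclosed]
          exact (Term.realize_constants).symm
        -- (f) : dichotomy on the chain identity
        rcases min_dichotomy hG hmin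
            {(⟨q.k, chain w q.lhs q.rhs c₀.term c₁.term, c₁.term⟩ : EqId L)} with hl | hr
        · have hsub : Subsingleton S₀ := by
            refine hl S₀ iS₀ hVS₀ (fun e he => ?_)
            rw [Set.mem_singleton_iff] at he
            subst he
            exact hS₀e
          have : (⟨(c₀ : F), hc₀S⟩ : S₀) = ⟨(c₁ : F), hc₁S⟩ := Subsingleton.elim _ _
          exact hcF (congrArg Subtype.val this)
        · have hAe : (chain w q.lhs q.rhs c₀.term c₁.term).realize x₀
              = (c₁.term : L.Term (Fin q.k)).realize x₀ :=
            hr _ rfl A iA hA x₀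
          rw [chain_realize_eq w hid1A hid3A hall, Term.realize_constants,
            Term.realize_constants] at hAe
          exact hcA hAe
      -- Step 3 : the active argument
      obtain ⟨wcl, hwcl⟩ := hsol
      set vb : Fin q.k → L.Term (Fin q.k) := fun j =>
        chain w q.lhs q.rhs (Term.var j) ((wcl j).relabel Fin.elim0) with hvb
      have hprem : ∀ i, EK K ⟨q.k, (q.lhs i).subst vb, (q.rhs i).subst vb⟩ := by
        intro i C iC hC y
        letI := iC
        have hdC := hKd C iC hC
        show ((q.lhs i).subst vb).realize y = ((q.rhs i).subst vb).realize y
        rw [Term.realize_subst, Term.realize_subst]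
        by_cases hEy : ∀ i', (q.lhs i').realize y = (q.rhs i').realize y
        · have hvy : (fun j => (vb j).realize y) = y := by
            funext j
            simp only [hvb]
            exact chain_realize_eq w (discr_id1 w hdC) (discr_id3 w hdC) hEy
          rw [hvy]
          exact hEy i
        · push_neg at hEy
          have hvy : (fun j => (vb j).realize y) = fun j => (wcl j).realize (y ∘ Fin.elim0) := by
            funext j
            simp only [hvb]
            rw [chain_realize_ne w hdC hEy]
            exact Term.realize_relabel
          rw [hvy]
          have hcli := hwcl i C iC hC (y ∘ Fin.elim0)
          show (q.lhs i).realize (fun j => (wcl j).realize (y ∘ Fin.elim0))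
            = (q.rhs i).realize (fun j => (wcl j).realize (y ∘ Fin.elim0))
          have hcli' : ((q.lhs i).subst wcl).realize (y ∘ Fin.elim0)
              = ((q.rhs i).subst wcl).realize (y ∘ Fin.elim0) := hcli
          rw [Term.realize_subst, Term.realize_subst] at hcli'
          exact hcli'
      have hconc : EK K ⟨q.k, q.cl.subst vb, q.cr.subst vb⟩ := by
        apply EK_of_eq_at_gen hG hF c₀
        rw [Term.realize_subst, Term.realize_subst]
        apply hqF (fun j => (vb j).realize (fun i : Fin q.k => g i.val))
        intro i
        have hi : ((q.lhs i).subst vb).realize (fun i : Fin q.k => g i.val)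
            = ((q.rhs i).subst vb).realize (fun i : Fin q.k => g i.val) :=
          (mem_iff_EK hG F iF).mp hF.1 _ (hprem i) (fun i : Fin q.k => g i.val)
        rw [Term.realize_subst, Term.realize_subst] at hi
        exact hi
      have hAe : (q.cl.subst vb).realize x₀ = (q.cr.subst vb).realize x₀ :=
        hconc A iA hA x₀
      rw [Term.realize_subst, Term.realize_subst] at hAe
      have hvx : (fun j => (vb j).realize x₀) = x₀ := by
        funext j
        simp only [hvb]
        exact chain_realize_eq w hid1A hid3A hall
      rw [hvx] at hAe
      exact hAe
    · push_neg at hall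
      exact chain_realize_ne w hdA hall
  -- conclude for M
  have hM1 := mem_id1 hKd hG hMV
  have hM3 := mem_id3 hKd hG hMV
  have hMe : (chain w q.lhs q.rhs q.cl q.cr).realize x = q.cr.realize x :=
    (mem_iff_EK hG M iM).mp hMV _ hchainEK x
  have hMu : (chain w q.lhs q.rhs q.cl q.cr).realize x = q.cl.realize x :=
    chain_realize_eq w hM1 hM3 hx
  exact hMu.symm.trans hMe

end Stmt12
theorem stmt_12 {L : FirstOrder.Language.{u, u}} [L.IsAlgebraic]
    (V : ∀ M : Type u, L.Structure M → Prop) (hD : IsDiscriminatorVariety V)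
    (F : Type u) [iF : L.Structure F] (g : ℕ → F) (hF : IsFreeAlgOn V F g)
    (c₀ c₁ : L.Constants)
    (hc : Structure.funMap c₀ (Fin.elim0 : Fin 0 → F) ≠
      Structure.funMap c₁ (Fin.elim0 : Fin 0 → F)) :
    IsSC V F ↔ IsMinimalVariety V := by
  obtain ⟨K, w, hKd, hG⟩ := hD
  have hc' : (c₀ : F) ≠ (c₁ : F) := by
    rwa [funMap_eq_coe_constants, funMap_eq_coe_constants] at hc
  constructor
  · exact fun hSC => Stmt12.min_of_sc ‹L.IsAlgebraic› hKd hG hF c₀ c₁ hc' hSC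
  · exact fun hmin => Stmt12.sc_of_min ‹L.IsAlgebraic› hKd hG hF c₀ c₁ hc' hmin
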